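/- arXiv:2310.09808 — 3 statements merged into one kernel-verified Lean document; each statement's English description precedes it below -/
import Mathlib

section
/- Let k ≥ 1 and 0 ≤ j ≤ k-1 be natural numbers, and let ρ be an integer with 1+j ≤ ρ ≤ k-1. Then ∑_{t=j}^{k-1} C(k+ρ-1, t) * ((2k-2-t)! / (k-1-t)!) * C(t,j) * (-1)^t = 0. -/
/-- Alternating Vandermonde-type identity:
`∑_{s=0}^{r} (-1)^s C(N,s) C(N+d-s, r-s) = C(d,r)`. -/
lemma vander (N : ℕ) : ∀ d r : ℕ,
    ∑ s ∈ Finset.range (r + 1),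
      (-1 : ℤ) ^ s * (N.choose s) * ((N + d - s).choose (r - s)) = d.choose r := by
  induction N with
  | zero =>
    intro d r
    rw [Finset.sum_eq_single 0]
    · simp
    · intro b _ hb0
      simp [Nat.choose_eq_zero_of_lt (Nat.pos_of_ne_zero hb0)]
    · simp
  | succ N ih =>
    intro d r
    cases r with
    | zero => simp
    | succ r =>
      have key : ∑ s ∈ Finset.range (r + 1 + 1),
          (-1 : ℤ) ^ s * ((N + 1).choose s) * ((N + 1 + d - s).choose (r + 1 - s))
          = (∑ s ∈ Finset.range (r + 1 + 1),
              (-1 : ℤ) ^ s * (N.choose s) * ((N + (d + 1) - s).choose (r + 1 - s)))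
            - ∑ s ∈ Finset.range (r + 1),
              (-1 : ℤ) ^ s * (N.choose s) * ((N + d - s).choose (r - s)) := by
        rw [Finset.sum_range_succ' (fun s =>
              (-1 : ℤ) ^ s * ((N + 1).choose s) * ((N + 1 + d - s).choose (r + 1 - s))) (r + 1),
            Finset.sum_range_succ' (fun s =>
              (-1 : ℤ) ^ s * (N.choose s) * ((N + (d + 1) - s).choose (r + 1 - s))) (r + 1)]
        have e0 : (N + 1 + d - 0).choose (r + 1 - 0) = (N + (d + 1) - 0).choose (r + 1 - 0) := by
          congr 1; omega
        have hterm : ∀ s ∈ Finset.range (r + 1),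
            (-1 : ℤ) ^ (s + 1) * ((N + 1).choose (s + 1)) *
                ((N + 1 + d - (s + 1)).choose (r + 1 - (s + 1)))
            = (-1 : ℤ) ^ (s + 1) * (N.choose (s + 1)) *
                ((N + (d + 1) - (s + 1)).choose (r + 1 - (s + 1)))
              - (-1 : ℤ) ^ s * (N.choose s) * ((N + d - s).choose (r - s)) := by
          intro s _
          have h1 : N + 1 + d - (s + 1) = N + d - s := by omega
          have h2 : N + (d + 1) - (s + 1) = N + d - s := by omega
          have h3 : r + 1 - (s + 1) = r - s := by omega
          have h4 : (N + 1).choose (s + 1) = N.choose s + N.choose (s + 1) :=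
            Nat.choose_succ_succ _ _
          rw [h1, h2, h3, h4]
          push_cast
          ring
        rw [Finset.sum_congr rfl hterm, Finset.sum_sub_distrib, e0]
        simp only [Nat.choose_zero_right]
        ring
      rw [key, ih (d + 1) (r + 1), ih d r]
      have : (d + 1).choose (r + 1) = d.choose r + d.choose (r + 1) := Nat.choose_succ_succ _ _
      rw [this]
      push_cast
      ring

theorem phi_root (k j ρ : ℕ) (hk : 1 ≤ k) (hj : j ≤ k - 1)
    (hρ1 : 1 + j ≤ ρ) (hρ2 : ρ ≤ k - 1) :
    ∑ t ∈ Finset.Icc j (k - 1),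
      ((k + ρ - 1).choose t : ℤ) * ((2 * k - 2 - t).factorial / (k - 1 - t).factorial : ℕ)
        * (t.choose j) * (-1) ^ t = 0 := by
  obtain ⟨m, rfl⟩ : ∃ m, k = m + 1 := ⟨k - 1, by omega⟩
  have hjm : j ≤ m := by omega
  have hρm : ρ ≤ m := by omega
  have hjρ : j + 1 ≤ ρ := by omega
  have e1 : m + 1 + ρ - 1 = m + ρ := by omega
  have e2 : m + 1 - 1 = m := by omega
  rw [e1, e2]
  -- rewrite each term
  have hterm : ∀ t ∈ Finset.Icc j m,
      ((m + ρ).choose t : ℤ) * ((2 * (m + 1) - 2 - t).factorial / (m - t).factorial : ℕ)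
        * (t.choose j) * (-1) ^ t
      = ((m.factorial : ℤ) * ((m + ρ).choose j)) *
          ((-1) ^ t * ((m + ρ - j).choose (t - j)) * ((2 * m - t).choose (m - t))) := by
    intro t ht
    rw [Finset.mem_Icc] at ht
    obtain ⟨htj, htm⟩ := ht
    have e3 : 2 * (m + 1) - 2 - t = 2 * m - t := by omega
    -- factorial quotient: (2m-t)!/(m-t)! = C(2m-t, m) * m!
    have hfac : (2 * m - t).factorial / (m - t).factorial = (2 * m - t).choose m * m.factorial := by
      have hmle : m ≤ 2 * m - t := by omega
      have := Nat.choose_mul_factorial_mul_factorial hmle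
      have hsub : 2 * m - t - m = m - t := by omega
      rw [hsub] at this
      rw [← this, Nat.mul_div_cancel _ (Nat.factorial_pos _)]
    -- choose product: C(m+ρ, t) C(t, j) = C(m+ρ, j) C(m+ρ-j, t-j)
    have hch : (m + ρ).choose t * t.choose j = (m + ρ).choose j * (m + ρ - j).choose (t - j) :=
      Nat.choose_mul htj
    -- symmetry: C(2m-t, m) = C(2m-t, m-t)
    have hsym : (2 * m - t).choose m = (2 * m - t).choose (m - t) := by
      rw [← Nat.choose_symm (by omega : m ≤ 2 * m - t)]
      congr 1
      omega
    rw [e3, hfac, hsym]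
    push_cast
    have : ((m + ρ).choose t : ℤ) * t.choose j
        = ((m + ρ).choose j : ℤ) * (m + ρ - j).choose (t - j) := by exact_mod_cast hch
    linear_combination ((m.factorial : ℤ) * (-1) ^ t * ((2 * m - t).choose (m - t))) * this
  rw [Finset.sum_congr rfl hterm, ← Finset.mul_sum]
  have hzero : ∑ t ∈ Finset.Icc j m,
      ((-1 : ℤ) ^ t * ((m + ρ - j).choose (t - j)) * ((2 * m - t).choose (m - t))) = 0 := by
    rw [← Finset.Ico_add_one_right_eq_Icc, Finset.sum_Ico_eq_sum_range]
    have e4 : m + 1 - j = m - j + 1 := by omega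
    rw [e4]
    have hterm2 : ∀ s ∈ Finset.range (m - j + 1),
        ((-1 : ℤ) ^ (j + s) * ((m + ρ - j).choose (j + s - j)) *
            ((2 * m - (j + s)).choose (m - (j + s))))
        = (-1 : ℤ) ^ j * ((-1 : ℤ) ^ s * ((m + ρ - j).choose s) *
            (((m + ρ - j) + (m - ρ) - s).choose ((m - j) - s))) := by
      intro s hs
      rw [Finset.mem_range] at hs
      have e5 : j + s - j = s := by omega
      have e6 : 2 * m - (j + s) = (m + ρ - j) + (m - ρ) - s := by omega
      have e7 : m - (j + s) = (m - j) - s := by omega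
      rw [e5, e6, e7, pow_add]
      ring
    rw [Finset.sum_congr rfl hterm2, ← Finset.mul_sum, vander (m + ρ - j) (m - ρ) (m - j)]
    have : (m - ρ).choose (m - j) = 0 := Nat.choose_eq_zero_of_lt (by omega)
    rw [this]
    simp
  rw [hzero, mul_zero]
end

section
/- Let k ≥ 1 and 0 ≤ j ≤ k-1. Then for every integer n, ∑_{t=j}^{k-1} C(n-1, t) * ((2k-2-t)! / (k-1-t)!) * C(t,j) * (-1)^t = (-1)^{k-1} * C(k-1, j) * (n-1)_j * (n-(k+1+j))_{k-1-j}, where (x)_m denotes the falling factorial x(x-1)⋯(x-m+1). -/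
/-- generalized binomial coefficient of a rational argument -/
noncomputable def gchoose (x : ℚ) (m : ℕ) : ℚ :=
  (∏ i ∈ Finset.range m, (x - i)) / m.factorial

/-- falling factorial of a rational argument -/
noncomputable def fallingFac (x : ℚ) (m : ℕ) : ℚ :=
  ∏ i ∈ Finset.range m, (x - i)

lemma gchoose_eq (x : ℚ) (m : ℕ) : gchoose x m = fallingFac x m / m.factorial := rfl

lemma fallingFac_zero (x : ℚ) : fallingFac x 0 = 1 := by simp [fallingFac]

lemma gchoose_zero (x : ℚ) : gchoose x 0 = 1 := by simp [gchoose]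

lemma fallingFac_succ (x : ℚ) (m : ℕ) :
    fallingFac x (m+1) = fallingFac x m * (x - m) := by
  simp [fallingFac, Finset.prod_range_succ]

lemma fallingFac_succ' (x : ℚ) (m : ℕ) :
    fallingFac x (m+1) = x * fallingFac (x-1) m := by
  rw [fallingFac, fallingFac, Finset.prod_range_succ']
  simp only [Nat.cast_zero, sub_zero, Nat.cast_add, Nat.cast_one]
  rw [mul_comm]
  congr 1
  apply Finset.prod_congr rfl
  intro i _
  ring

lemma fallingFac_add (x : ℚ) (a b : ℕ) :
    fallingFac x (a + b) = fallingFac x a * fallingFac (x - a) b := by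
  induction b with
  | zero => simp [fallingFac_zero]
  | succ b ih =>
    rw [show a + (b+1) = (a+b)+1 from rfl, fallingFac_succ, ih, fallingFac_succ]
    push_cast
    ring

lemma gchoose_pascal (x : ℚ) (m : ℕ) :
    gchoose x (m+1) = gchoose (x-1) m + gchoose (x-1) (m+1) := by
  have hm : (m.factorial : ℚ) ≠ 0 := Nat.cast_ne_zero.mpr m.factorial_ne_zero
  have hm1 : ((m+1 : ℕ) : ℚ) ≠ 0 := by positivity
  rw [gchoose_eq, gchoose_eq, gchoose_eq, fallingFac_succ' x m,
    fallingFac_succ (x-1) m, Nat.factorial_succ]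
  push_cast
  field_simp
  ring

lemma lemA (y : ℚ) (M : ℕ) :
    ∑ s ∈ Finset.range (M+1), (-1 : ℚ)^s * gchoose y s = (-1)^M * gchoose (y-1) M := by
  induction M with
  | zero => simp [gchoose_zero]
  | succ M ih =>
    rw [Finset.sum_range_succ, ih, gchoose_pascal y M]
    ring

lemma lemT (a : ℕ) : ∀ (M : ℕ) (y : ℚ),
    ∑ s ∈ Finset.range (M+1),
      (-1 : ℚ)^s * gchoose y s * ((a + M - s).choose (M - s) : ℚ)
    = (-1)^M * gchoose (y - a - 1) M := by
  induction a with
  | zero =>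
    intro M y
    have h : ∀ s ∈ Finset.range (M+1),
        (-1 : ℚ)^s * gchoose y s * ((0 + M - s).choose (M - s) : ℚ)
          = (-1 : ℚ)^s * gchoose y s := by
      intro s hs
      simp [Nat.zero_add]
    rw [Finset.sum_congr rfl h, lemA]
    norm_num
  | succ a iha =>
    intro M
    induction M with
    | zero =>
      intro y
      simp [gchoose_zero]
    | succ M ihM =>
      intro y
      have key : ∀ s ∈ Finset.range (M+1),
          (-1 : ℚ)^s * gchoose y s * (((a+1) + (M+1) - s).choose ((M+1) - s) : ℚ)
          = (-1 : ℚ)^s * gchoose y s * ((a + (M+1) - s).choose ((M+1) - s) : ℚ)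
            + (-1 : ℚ)^s * gchoose y s * (((a+1) + M - s).choose (M - s) : ℚ) := by
        intro s hs
        rw [Finset.mem_range] at hs
        have hsM : s ≤ M := Nat.lt_succ_iff.mp hs
        obtain ⟨u, hu⟩ := Nat.exists_eq_add_of_le hsM
        have e1 : (a+1) + (M+1) - s = (a + u + 1) + 1 := by omega
        have e2 : (M+1) - s = u + 1 := by omega
        have e3 : a + (M+1) - s = a + u + 1 := by omega
        have e4 : (a+1) + M - s = a + u + 1 := by omega
        have e5 : M - s = u := by omega
        rw [e1, e2, e3, e4, e5, Nat.choose_succ_succ (a+u+1) u]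
        push_cast
        ring
      rw [Finset.sum_range_succ, Finset.sum_congr rfl key, Finset.sum_add_distrib]
      have step1 : ∑ s ∈ Finset.range (M+1),
          (-1 : ℚ)^s * gchoose y s * ((a + (M+1) - s).choose ((M+1) - s) : ℚ)
          = (-1)^(M+1) * gchoose (y - a - 1) (M+1)
            - (-1 : ℚ)^(M+1) * gchoose y (M+1) := by
        have := iha (M+1) y
        rw [Finset.sum_range_succ] at this
        have hlast : (-1 : ℚ)^(M+1) * gchoose y (M+1)
            * ((a + (M+1) - (M+1)).choose ((M+1) - (M+1)) : ℚ)
            = (-1 : ℚ)^(M+1) * gchoose y (M+1) := by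
          simp
        rw [hlast] at this
        linarith [this]
      rw [step1, ihM y]
      have hlast2 : (((a+1) + (M+1) - (M+1)).choose ((M+1) - (M+1)) : ℚ) = 1 := by
        simp
      rw [hlast2]
      have hp : gchoose (y - a - 1) (M+1)
          = gchoose (y - a - 1 - 1) M + gchoose (y - a - 1 - 1) (M+1) :=
        gchoose_pascal (y - a - 1) M
      have hc1 : (y - ((a : ℚ)+1) - 1) = y - a - 1 - 1 := by push_cast; ring
      push_cast
      rw [show y - ((a : ℚ)+1) - 1 = y - a - 1 - 1 by ring]
      rw [hp]
      ring

lemma gchoose_mul_choose (x : ℚ) (j s : ℕ) :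
    gchoose x (j + s) * ((j + s).choose j : ℚ)
      = gchoose x j * gchoose (x - j) s := by
  have hfac : ((j+s).choose j) * j.factorial * s.factorial = (j+s).factorial := by
    have := Nat.choose_mul_factorial_mul_factorial (Nat.le_add_right j s)
    simpa using this
  have hj : (j.factorial : ℚ) ≠ 0 := Nat.cast_ne_zero.mpr j.factorial_ne_zero
  have hs : (s.factorial : ℚ) ≠ 0 := Nat.cast_ne_zero.mpr s.factorial_ne_zero
  have hjs : ((j+s).factorial : ℚ) ≠ 0 := Nat.cast_ne_zero.mpr (j+s).factorial_ne_zero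
  rw [gchoose_eq, gchoose_eq, gchoose_eq, fallingFac_add x j s]
  have hfacQ : (((j+s).choose j : ℚ)) * (j.factorial : ℚ) * (s.factorial : ℚ)
      = ((j+s).factorial : ℚ) := by exact_mod_cast congrArg (Nat.cast (R := ℚ)) hfac
  field_simp
  linear_combination (fallingFac x j * fallingFac (x - (j:ℚ)) s) * hfacQ

theorem phi_closed_form (k j : ℕ) (hk : 1 ≤ k) (hj : j ≤ k - 1) (n : ℤ) :
    ∑ t ∈ Finset.Icc j (k - 1),
      gchoose ((n : ℚ) - 1) t * ((2 * k - 2 - t).factorial / (k - 1 - t).factorial : ℕ)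
        * (t.choose j) * (-1) ^ t =
      (-1) ^ (k - 1) * ((k - 1).choose j : ℚ) * fallingFac ((n : ℚ) - 1) j *
        fallingFac ((n : ℚ) - (k + 1 + j)) (k - 1 - j) := by
  obtain ⟨m, rfl⟩ : ∃ m, k = m + 1 := ⟨k - 1, by omega⟩
  simp only [Nat.add_sub_cancel] at hj ⊢
  obtain ⟨M, hM⟩ := Nat.exists_eq_add_of_le hj
  subst hM
  set x : ℚ := (n : ℚ) - 1 with hx
  rw [← Finset.Ico_add_one_right_eq_Icc, Finset.sum_Ico_eq_sum_range]
  rw [show j + M + 1 - j = M + 1 by omega]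
  have term_eq : ∀ i ∈ Finset.range (M+1),
      gchoose x (j+i) * ((2 * (j + M + 1) - 2 - (j+i)).factorial
          / ((j + M) - (j+i)).factorial : ℕ) * ((j+i).choose j) * (-1 : ℚ)^(j+i)
      = (gchoose x j * ((j+M).factorial : ℚ) * (-1)^j)
        * ((-1 : ℚ)^i * gchoose (x - (j:ℚ)) i
            * (((j+M) + M - i).choose (M - i) : ℚ)) := by
    intro i hi
    rw [Finset.mem_range] at hi
    have hiM : i ≤ M := Nat.lt_succ_iff.mp hi
    have h1 : 2 * (j + M + 1) - 2 - (j+i) = (j+M) + M - i := by omega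
    have h2 : (j + M) - (j+i) = M - i := by omega
    have hle : j + M ≤ (j+M) + M - i := by omega
    have hfact : ((j + M) + M - i).factorial / (M - i).factorial
        = ((j+M) + M - i).choose (j+M) * (j+M).factorial := by
      have h3 := Nat.choose_mul_factorial_mul_factorial hle
      rw [show (j+M) + M - i - (j+M) = M - i by omega] at h3
      rw [← h3, Nat.mul_div_cancel _ (Nat.factorial_pos _)]
    have hsymm : ((j+M) + M - i).choose (j+M) = ((j+M) + M - i).choose (M - i) := by
      rw [← Nat.choose_symm hle, show (j+M) + M - i - (j+M) = M - i by omega]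
    rw [h1, h2, hfact, hsymm]
    have htri := gchoose_mul_choose x j i
    push_cast
    rw [pow_add]
    linear_combination ((((j+M) + M - i).choose (M - i) : ℚ) * ((j+M).factorial : ℚ)
      * (-1:ℚ)^j * (-1:ℚ)^i) * htri
  rw [Finset.sum_congr rfl term_eq, ← Finset.mul_sum, lemT (j+M) M (x - (j:ℚ))]
  have harg : (n : ℚ) - ((j + M + 1 : ℕ) + 1 + (j : ℕ)) = x - (j:ℚ) - (j+M : ℕ) - 1 := by
    rw [hx]; push_cast; ring
  rw [harg]
  have hfm : ((j+M).factorial : ℚ)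
      = ((j+M).choose j : ℚ) * j.factorial * M.factorial := by
    have h4 := Nat.choose_mul_factorial_mul_factorial (Nat.le_add_right j M)
    rw [show j + M - j = M by omega] at h4
    exact_mod_cast h4.symm
  rw [gchoose_eq, gchoose_eq, hfm]
  have hj0 : (j.factorial : ℚ) ≠ 0 := Nat.cast_ne_zero.mpr j.factorial_ne_zero
  have hM0 : (M.factorial : ℚ) ≠ 0 := Nat.cast_ne_zero.mpr M.factorial_ne_zero
  push_cast
  rw [pow_add]
  rw [show j + M - j = M by omega]
  field_simp
end

section
/- Let ξ = r e^{iθ} and η = r e^{-iθ} with r > 0, sin θ ≠ 0, let k ≥ 1, and let n ≥ 2k. Then the (k-1)-st derivative of z^{n-1}/(z-η)^k evaluated at z = ξ equals (k-1)! · r^{n-2k} e^{i(n-1)θ} (-1)^{k-1} (2i sin θ)^{1-2k} · (1/(k-1)!) ∑_{t=0}^{k-1} C(n-1,t) ((2k-2-t)!/(k-1-t)!) (e^{-2iθ} - 1)^t. -/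
open Complex


def resCC (k n m t : ℕ) : ℕ :=
  m.choose t * (n - 1).descFactorial t * (k + m - t - 1).descFactorial (m - t)

lemma resCC_rec (k n m t : ℕ) (hk : 1 ≤ k) (ht : t ≤ m) :
    resCC k n (m + 1) (t + 1) = resCC k n m t * (n - 1 - t) + resCC k n m (t + 1) * (k + m - t - 1) := by
  unfold resCC
  have h1 : k + (m + 1) - (t + 1) - 1 = k + m - t - 1 := by omega
  have h2 : (m + 1) - (t + 1) = m - t := by omega
  have hd : (n - 1).descFactorial (t + 1) = (n - 1 - t) * (n - 1).descFactorial t :=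
    Nat.descFactorial_succ _ _
  rw [Nat.choose_succ_succ, h1, h2, hd, add_mul, add_mul]
  congr 1
  · ring
  · rcases Nat.lt_or_ge t m with hlt | hge
    · have h3 : k + m - (t + 1) - 1 = k + m - t - 2 := by omega
      have h4 : m - (t + 1) = m - t - 1 := by omega
      have hsplit : (k + m - t - 1).descFactorial (m - t)
          = (k + m - t - 1) * (k + m - t - 2).descFactorial (m - t - 1) := by
        have h5 : k + m - t - 1 = (k + m - t - 2) + 1 := by omega
        have h6 : m - t = (m - t - 1) + 1 := by omega
        rw [h5, h6, Nat.succ_descFactorial_succ, ← h5]; simp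
      rw [h3, h4, hsplit]
      ring
    · have htm : t = m := by omega
      subst htm
      simp [Nat.choose_succ_self]

lemma resCC_zero_rec (k n m : ℕ) (hk : 1 ≤ k) :
    resCC k n (m + 1) 0 = resCC k n m 0 * (k + m) := by
  unfold resCC
  simp only [Nat.choose_zero_right, Nat.descFactorial_zero, one_mul, Nat.sub_zero]
  have h1 : k + (m + 1) - 1 = (k + m - 1) + 1 := by omega
  rw [h1, Nat.succ_descFactorial_succ]
  have h2 : k + m - 1 + 1 = k + m := by omega
  rw [h2]
  ring

lemma aux_iterated (η : ℂ) (k n : ℕ) (hk : 1 ≤ k) :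
    ∀ m : ℕ, m + 1 < n → ∀ z : ℂ, z ≠ η →
      iteratedDeriv m (fun z : ℂ => z ^ (n - 1) / (z - η) ^ k) z =
        ∑ t ∈ Finset.range (m + 1), (resCC k n m t : ℂ) * (-1) ^ (m - t) *
          z ^ (n - 1 - t) * (z - η) ^ (-(k : ℤ) - ((m - t : ℕ) : ℤ)) := by
  intro m
  induction m with
  | zero =>
    intro hmn z hz
    have hzη : z - η ≠ 0 := sub_ne_zero.mpr hz
    rw [iteratedDeriv_zero, Finset.sum_range_one]
    simp [resCC, zpow_neg, div_eq_mul_inv]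
  | succ m ih =>
    intro hmn z hz
    have hmn' : m + 1 < n := by omega
    have hzη : z - η ≠ 0 := sub_ne_zero.mpr hz
    rw [iteratedDeriv_succ]
    have hev : iteratedDeriv m (fun z : ℂ => z ^ (n - 1) / (z - η) ^ k) =ᶠ[nhds z]
        (fun w : ℂ => ∑ t ∈ Finset.range (m + 1), (resCC k n m t : ℂ) * (-1) ^ (m - t) *
          w ^ (n - 1 - t) * (w - η) ^ (-(k : ℤ) - ((m - t : ℕ) : ℤ))) := by
      filter_upwards [compl_singleton_mem_nhds hz] with w hw
      exact ih hmn' w hw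
    rw [hev.deriv_eq]
    have hder : HasDerivAt (fun w : ℂ => ∑ t ∈ Finset.range (m + 1), (resCC k n m t : ℂ) * (-1) ^ (m - t) *
          w ^ (n - 1 - t) * (w - η) ^ (-(k : ℤ) - ((m - t : ℕ) : ℤ)))
        (∑ t ∈ Finset.range (m + 1), (resCC k n m t : ℂ) * (-1) ^ (m - t) *
          (((n - 1 - t : ℕ) : ℂ) * z ^ (n - 1 - t - 1) * (z - η) ^ (-(k : ℤ) - ((m - t : ℕ) : ℤ)) +
           z ^ (n - 1 - t) * (((-(k : ℤ) - ((m - t : ℕ) : ℤ)) : ℂ) * (z - η) ^ ((-(k : ℤ) - ((m - t : ℕ) : ℤ)) - 1)))) z := by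
      apply HasDerivAt.fun_sum
      intro t _
      have h1 : HasDerivAt (fun w : ℂ => w ^ (n - 1 - t)) (((n - 1 - t : ℕ) : ℂ) * z ^ (n - 1 - t - 1)) z :=
        hasDerivAt_pow _ z
      have h2 : HasDerivAt (fun w : ℂ => (w - η) ^ (-(k : ℤ) - ((m - t : ℕ) : ℤ)))
          ((((-(k : ℤ) - ((m - t : ℕ) : ℤ)) : ℂ)) * (z - η) ^ ((-(k : ℤ) - ((m - t : ℕ) : ℤ)) - 1)) z := by
        have := (hasDerivAt_zpow (-(k : ℤ) - ((m - t : ℕ) : ℤ)) (z - η) (Or.inl hzη)).comp z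
          ((hasDerivAt_id z).sub_const η)
        convert this using 1
        · rfl
        · rfl
        · rfl
        · simp
      have h3 := h1.fun_mul h2
      have h4 := h3.const_mul ((resCC k n m t : ℂ) * (-1) ^ (m - t))
      convert h4 using 1
      · rfl
      · funext y; ring
    rw [hder.deriv]
    have hA : ∀ t ∈ Finset.range (m + 1),
        (resCC k n m t : ℂ) * (-1) ^ (m - t) *
          (((n - 1 - t : ℕ) : ℂ) * z ^ (n - 1 - t - 1) * (z - η) ^ (-(k : ℤ) - ((m - t : ℕ) : ℤ)) +
           z ^ (n - 1 - t) * (((-(k : ℤ) - ((m - t : ℕ) : ℤ)) : ℂ) * (z - η) ^ ((-(k : ℤ) - ((m - t : ℕ) : ℤ)) - 1))) =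
        ((resCC k n m t * (n - 1 - t) : ℕ) : ℂ) * (-1) ^ (m - t) * z ^ (n - 1 - t - 1) *
            (z - η) ^ (-(k : ℤ) - ((m - t : ℕ) : ℤ)) +
          ((resCC k n m t * (k + m - t) : ℕ) : ℂ) * (-1) ^ (m + 1 - t) * z ^ (n - 1 - t) *
            (z - η) ^ (-(k : ℤ) - ((m + 1 - t : ℕ) : ℤ)) := by
      intro t htmem
      have htm : t ≤ m := by simpa [Nat.lt_succ_iff] using htmem
      have e1 : m + 1 - t = (m - t) + 1 := by omega
      have e2 : k + m - t = k + (m - t) := by omega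
      have e3 : (-(k : ℤ) - (((m - t) + 1 : ℕ) : ℤ)) = (-(k : ℤ) - ((m - t : ℕ) : ℤ)) - 1 := by
        push_cast; ring
      rw [e1, e2, e3]
      push_cast
      ring
    rw [Finset.sum_congr rfl hA, Finset.sum_add_distrib, Finset.sum_range_succ' _ (m + 1)]
    have hT : ∀ t ∈ Finset.range (m + 1),
        (resCC k n (m + 1) (t + 1) : ℂ) * (-1) ^ (m + 1 - (t + 1)) * z ^ (n - 1 - (t + 1)) *
            (z - η) ^ (-(k : ℤ) - ((m + 1 - (t + 1) : ℕ) : ℤ)) =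
        ((resCC k n m t * (n - 1 - t) : ℕ) : ℂ) * (-1) ^ (m - t) * z ^ (n - 1 - t - 1) *
            (z - η) ^ (-(k : ℤ) - ((m - t : ℕ) : ℤ)) +
          ((resCC k n m (t + 1) * (k + m - t - 1) : ℕ) : ℂ) * (-1) ^ (m - t) * z ^ (n - 1 - t - 1) *
            (z - η) ^ (-(k : ℤ) - ((m - t : ℕ) : ℤ)) := by
      intro t htmem
      have htm : t ≤ m := by simpa [Nat.lt_succ_iff] using htmem
      have e1 : m + 1 - (t + 1) = m - t := by omega
      have e2 : n - 1 - (t + 1) = n - 1 - t - 1 := by omega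
      rw [e1, e2, resCC_rec k n m t hk htm]
      push_cast
      ring
    rw [Finset.sum_congr rfl hT, Finset.sum_add_distrib, add_assoc]
    congr 1
    rw [Finset.sum_range_succ' _ m, Finset.sum_range_succ]
    have hBm : ((resCC k n m (m + 1) * (k + m - m - 1) : ℕ) : ℂ) * (-1) ^ (m - m) * z ^ (n - 1 - m - 1) *
        (z - η) ^ (-(k : ℤ) - ((m - m : ℕ) : ℤ)) = 0 := by
      simp [resCC, Nat.choose_succ_self]
    rw [hBm, add_zero]
    congr 1
    · apply Finset.sum_congr rfl
      intro t htmem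
      have htm : t < m := by simpa [Nat.lt_succ_iff] using Finset.mem_range.mp htmem
      have e1 : k + m - (t + 1) = k + m - t - 1 := by omega
      have e2 : m + 1 - (t + 1) = m - t := by omega
      have e3 : n - 1 - (t + 1) = n - 1 - t - 1 := by omega
      rw [e1, e2, e3]
    · have e1 : m + 1 - 0 = m + 1 := by omega
      have e2 : k + m - 0 = k + m := by omega
      rw [e2, resCC_zero_rec k n m hk]

lemma coeff_eq (k n t : ℕ) (hk : 1 ≤ k) (hn : 2 * k ≤ n) (ht : t < k) :
    resCC k n (k - 1) t = (n - 1).choose t * ((2 * k - 2 - t).factorial / (k - 1 - t).factorial) := by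
  have h1 : (2 * k - 2 - t).factorial / (k - 1 - t).factorial
      = (2 * k - 2 - t).descFactorial (k - 1) := by
    rw [Nat.descFactorial_eq_div (show k - 1 ≤ 2 * k - 2 - t by omega),
      show 2 * k - 2 - t - (k - 1) = k - 1 - t by omega]
  have hsplit : (k - 1).descFactorial t * (2 * k - 2 - t).descFactorial (k - 1 - t)
      = (2 * k - 2 - t).descFactorial (k - 1) := by
    have h := Nat.descFactorial_mul_descFactorial
      (show k - 1 - t ≤ k - 1 by omega) (n := 2 * k - 2 - t)
    rw [show 2 * k - 2 - t - (k - 1 - t) = k - 1 by omega,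
      show k - 1 - (k - 1 - t) = t by omega] at h
    exact h
  unfold resCC
  rw [show k + (k - 1) - t - 1 = 2 * k - 2 - t by omega, h1,
    Nat.descFactorial_eq_factorial_mul_choose (n - 1) t, ← hsplit,
    Nat.descFactorial_eq_factorial_mul_choose (k - 1) t]
  ring

lemma term_alg (R E S c F : ℂ) (hR : R ≠ 0) (hE : E ≠ 0) (hS : S ≠ 0) (hF : F ≠ 0)
    (k n t : ℕ) (hk : 1 ≤ k) (hn : 2 * k ≤ n) (ht : t < k) :
    c * (-1) ^ (k - 1 - t) * (R * E) ^ (n - 1 - t) * ((R * S) ^ (2 * k - 1 - t))⁻¹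
    = F * R ^ (n - 2 * k) * E ^ (n - 1) * (-1) ^ (k - 1) * (S ^ (2 * k - 1))⁻¹ * (1 / F) *
      (c * (-(S * E⁻¹)) ^ t) := by
  have hsgn : (-1 : ℂ) ^ (k - 1 - t) = (-1) ^ (k - 1) * (-1) ^ t := by
    calc (-1 : ℂ) ^ (k - 1 - t) = (-1) ^ (k - 1 - t) * ((-1) ^ 2) ^ t := by norm_num
      _ = (-1) ^ ((k - 1 - t) + 2 * t) := by rw [pow_add, pow_mul]
      _ = (-1) ^ ((k - 1) + t) := by rw [show (k - 1 - t) + 2 * t = (k - 1) + t by omega]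
      _ = (-1) ^ (k - 1) * (-1) ^ t := pow_add _ _ _
  have hR1 : R ^ (n - 1 - t) = R ^ (n - 2 * k) * R ^ (2 * k - 1 - t) := by
    rw [← pow_add]; congr 1; omega
  have hE1 : E ^ (n - 1) = E ^ (n - 1 - t) * E ^ t := by
    rw [← pow_add]; congr 1; omega
  have hS1 : S ^ (2 * k - 1) = S ^ t * S ^ (2 * k - 1 - t) := by
    rw [← pow_add]; congr 1; omega
  have key : c * (-1) ^ (k - 1 - t) * (R * E) ^ (n - 1 - t) * (S ^ (2 * k - 1) * E ^ t * F)
      = F * R ^ (n - 2 * k) * E ^ (n - 1) * (-1) ^ (k - 1) * (c * ((-1) ^ t * S ^ t)) *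
        (R * S) ^ (2 * k - 1 - t) := by
    rw [mul_pow R E, mul_pow R S, hsgn, hR1, hE1, hS1]
    ring
  have h2 : (R * S) ^ (2 * k - 1 - t) ≠ 0 := pow_ne_zero _ (mul_ne_zero hR hS)
  have h3 : S ^ (2 * k - 1) ≠ 0 := pow_ne_zero _ hS
  have h4 : E ^ t ≠ 0 := pow_ne_zero _ hE
  rw [show (-(S * E⁻¹)) ^ t = (-1) ^ t * S ^ t / E ^ t by
    rw [neg_eq_neg_one_mul, mul_pow, mul_pow, inv_pow]; ring]
  field_simp
  apply mul_left_cancel₀ hF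
  linear_combination key

theorem iterated_deriv_residue_term
    (r θ : ℝ) (hr : 0 < r) (hθ : Real.sin θ ≠ 0)
    (ξ η : ℂ) (hξ : ξ = r * Complex.exp (θ * Complex.I))
    (hη : η = r * Complex.exp (-(θ : ℂ) * Complex.I))
    (k n : ℕ) (hk : 1 ≤ k) (hn : 2 * k ≤ n) :
    iteratedDeriv (k - 1) (fun z : ℂ => z ^ (n - 1) / (z - η) ^ k) ξ =
      ((k - 1).factorial : ℂ) * (r : ℂ) ^ ((n : ℤ) - 2 * k) *
        Complex.exp (((n : ℂ) - 1) * θ * Complex.I) * (-1) ^ (k - 1) *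
        (2 * Complex.I * Real.sin θ) ^ ((1 : ℤ) - 2 * k) *
        (1 / ((k - 1).factorial : ℂ)) *
        ∑ t ∈ Finset.range k, ((n - 1).choose t : ℂ) *
          (((2 * k - 2 - t).factorial / (k - 1 - t).factorial : ℕ) : ℂ) *
          (Complex.exp (-2 * θ * Complex.I) - 1) ^ t := by
  set E : ℂ := Complex.exp (θ * Complex.I) with hEdef
  set S : ℂ := 2 * Complex.I * (Real.sin θ : ℂ) with hSdef
  have hRne : (r : ℂ) ≠ 0 := ofReal_ne_zero.mpr hr.ne'
  have hEne : E ≠ 0 := Complex.exp_ne_zero _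
  have hSne : S ≠ 0 :=
    mul_ne_zero (mul_ne_zero two_ne_zero Complex.I_ne_zero) (ofReal_ne_zero.mpr hθ)
  have hFne : ((k - 1).factorial : ℂ) ≠ 0 := Nat.cast_ne_zero.mpr (Nat.factorial_ne_zero _)
  have hEinv : Complex.exp (-(θ : ℂ) * Complex.I) = E⁻¹ := by
    rw [hEdef, ← Complex.exp_neg]; ring_nf
  have hS : S = E - E⁻¹ := by
    rw [hSdef, hEdef, ← hEinv, Complex.ofReal_sin,
      Complex.exp_mul_I, show -(θ : ℂ) * Complex.I = (-(θ:ℂ)) * Complex.I by ring,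
      Complex.exp_mul_I, Complex.cos_neg, Complex.sin_neg]
    ring
  have hξη : ξ - η = (r : ℂ) * S := by
    rw [hξ, hη, hEinv, hS]; ring
  have hξne : ξ ≠ η := by
    have : ξ - η ≠ 0 := by rw [hξη]; exact mul_ne_zero hRne hSne
    exact sub_ne_zero.mp this
  have hD : Complex.exp (-2 * (θ : ℂ) * Complex.I) - 1 = -(S * E⁻¹) := by
    rw [show (-2 : ℂ) * (θ : ℂ) * Complex.I = -((θ:ℂ) * Complex.I) + -((θ:ℂ) * Complex.I) by ring,
      Complex.exp_add, Complex.exp_neg, ← hEdef, hS]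
    field_simp
    ring
  have hexp : Complex.exp (((n : ℂ) - 1) * θ * Complex.I) = E ^ (n - 1) := by
    rw [show ((n : ℂ) - 1) = ((n - 1 : ℕ) : ℂ) by
        push_cast [Nat.cast_sub (show 1 ≤ n by omega)]; ring,
      mul_assoc, Complex.exp_nat_mul, hEdef]
  have hmain := aux_iterated η k n hk (k - 1) (by omega) ξ hξne
  rw [hmain, show k - 1 + 1 = k by omega, Finset.mul_sum]
  apply Finset.sum_congr rfl
  intro t htmem
  have htk : t < k := Finset.mem_range.mp htmem
  have hz1 : (ξ - η) ^ (-(k : ℤ) - ((k - 1 - t : ℕ) : ℤ)) = (((r : ℂ) * S) ^ (2 * k - 1 - t))⁻¹ := by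
    rw [hξη, show -(k : ℤ) - ((k - 1 - t : ℕ) : ℤ) = -((2 * k - 1 - t : ℕ) : ℤ) by omega,
      zpow_neg, zpow_natCast]
  have hz2 : (r : ℂ) ^ ((n : ℤ) - 2 * (k : ℤ)) = (r : ℂ) ^ (n - 2 * k) := by
    rw [show (n : ℤ) - 2 * (k : ℤ) = ((n - 2 * k : ℕ) : ℤ) by omega, zpow_natCast]
  have hz3 : S ^ ((1 : ℤ) - 2 * (k : ℤ)) = (S ^ (2 * k - 1))⁻¹ := by
    rw [show (1 : ℤ) - 2 * (k : ℤ) = -((2 * k - 1 : ℕ) : ℤ) by omega, zpow_neg, zpow_natCast]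
  rw [coeff_eq k n t hk hn htk, Nat.cast_mul, hz1, hz2, hz3, hξ, hexp, hD]
  exact term_alg (r : ℂ) E S _ _ hRne hEne hSne hFne k n t hk hn htk
end
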